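/- Let $x_t$ solve $\dot x_t = (A - \tfrac{1}{2}\Sigma_t H^\top H) x_t$, where $\Sigma_t$ is a continuous path of positive definite matrices satisfying $\|\Sigma_t - \Sigma_\infty\|_2 \le M_1 e^{-\beta t}$, and suppose $\|e^{t(A - \frac{1}{2}\Sigma_\infty H^\top H)}\|_2 \le \sqrt{c}\, e^{-\beta t}$ for all $t \ge 0$ with $c \ge 1$. Then $|x_t| \le \alpha e^{-\beta t}|x_0|$ where $\alpha = \sqrt{c}\, e^{\sqrt{c} M_1 \|H^\top H\|_2 / (2\beta)}$. -/

import Mathlib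

open Matrix Real

set_option maxHeartbeats 1000000
set_option synthInstance.maxHeartbeats 400000

attribute [local instance] Matrix.frobeniusNormedAddCommGroup Matrix.frobeniusNormedSpace

/-- The spectral (ℓ²-operator) norm of a real square matrix. -/
noncomputable def specNorm {d : ℕ} (M : Matrix (Fin d) (Fin d) ℝ) : ℝ :=
  ‖(Matrix.toEuclideanCLM (𝕜 := ℝ) M : EuclideanSpace ℝ (Fin d) →L[ℝ] EuclideanSpace ℝ (Fin d))‖

section Aux

attribute [local instance] Matrix.frobeniusNormedRing Matrix.frobeniusNormedAlgebra

lemma specNorm_exp_smul {d : ℕ} (M : Matrix (Fin d) (Fin d) ℝ) (t : ℝ) :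
    Matrix.toEuclideanCLM (𝕜 := ℝ) (NormedSpace.exp (t • M)) =
      NormedSpace.exp (t • Matrix.toEuclideanCLM (𝕜 := ℝ) M) := by
  have hcont : Continuous (⇑(Matrix.toEuclideanCLM (n := Fin d) (𝕜 := ℝ))) :=
    LinearMap.continuous_of_finiteDimensional
      (E := Matrix (Fin d) (Fin d) ℝ)
      { toFun := ⇑(Matrix.toEuclideanCLM (n := Fin d) (𝕜 := ℝ)),
        map_add' := map_add _, map_smul' := _root_.map_smul _ }
  let _ : NormedAlgebra ℚ (Matrix (Fin d) (Fin d) ℝ) := .restrictScalars ℚ ℝ _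
  let _ : NormedAlgebra ℚ (EuclideanSpace ℝ (Fin d) →L[ℝ] EuclideanSpace ℝ (Fin d)) :=
    .restrictScalars ℚ ℝ _
  convert NormedSpace.map_exp _ hcont (t • M) using 2
  · rfl
  · rfl
  · rfl
  · rw [_root_.map_smul]

lemma toEuclideanCLM_continuous {d : ℕ} :
    Continuous (⇑(Matrix.toEuclideanCLM (n := Fin d) (𝕜 := ℝ))) :=
  LinearMap.continuous_of_finiteDimensional
    (E := Matrix (Fin d) (Fin d) ℝ)
    { toFun := ⇑(Matrix.toEuclideanCLM (n := Fin d) (𝕜 := ℝ)),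
      map_add' := map_add _, map_smul' := _root_.map_smul _ }

end Aux

/-- Integral form of Grönwall's lemma with exponentially decaying kernel. -/
lemma gronwall_exp_kernel {u : ℝ → ℝ} {C K β : ℝ} (hu : Continuous u)
    (hunn : ∀ t, 0 ≤ u t) (hK : 0 ≤ K) (hβ : 0 < β)
    (hle : ∀ t, 0 ≤ t → u t ≤ C + ∫ s in (0:ℝ)..t, K * Real.exp (-β * s) * u s) :
    ∀ t, 0 ≤ t → u t ≤ C * Real.exp (K / β) := by
  set a : ℝ → ℝ := fun s => K * Real.exp (-β * s) with ha
  have hacont : Continuous a := continuous_const.mul (Real.continuous_exp.comp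
    ((continuous_const.mul continuous_id)))
  have hcont_int : Continuous fun s => a s * u s := hacont.mul hu
  set Φ : ℝ → ℝ := fun t => C + ∫ s in (0:ℝ)..t, a s * u s with hΦ
  have hΦderiv : ∀ t : ℝ, HasDerivAt Φ (a t * u t) t := by
    intro t
    have hint : IntervalIntegrable (fun s => a s * u s) MeasureTheory.volume 0 t :=
      hcont_int.intervalIntegrable 0 t
    have := intervalIntegral.integral_hasDerivAt_right hint
      (hcont_int.stronglyMeasurableAtFilter _ _) hcont_int.continuousAt
    exact this.const_add C
  set g : ℝ → ℝ := fun t => (K / β) * Real.exp (-β * t) with hg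
  have hgderiv : ∀ t : ℝ, HasDerivAt g (-(a t)) t := by
    intro t
    have h1 : HasDerivAt (fun t : ℝ => -β * t) (-β) t := by
      simpa using (hasDerivAt_id t).const_mul (-β)
    have h2 := (h1.exp).const_mul (K / β)
    refine h2.congr_deriv ?_
    show K / β * (Real.exp (-β * t) * -β) = -(K * Real.exp (-β * t))
    rw [div_mul_eq_mul_div, div_eq_iff hβ.ne']; ring
  set Ψ : ℝ → ℝ := fun t => Φ t * Real.exp (g t) with hΨ
  have hΨderiv : ∀ t : ℝ, HasDerivAt Ψ
      (a t * u t * Real.exp (g t) + Φ t * (Real.exp (g t) * (-(a t)))) t := by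
    intro t
    exact (hΦderiv t).mul ((hgderiv t).exp)
  have hΦle : ∀ t, 0 ≤ t → u t ≤ Φ t := fun t ht => hle t ht
  have hΨanti : AntitoneOn Ψ (Set.Ici (0:ℝ)) := by
    apply antitoneOn_of_deriv_nonpos (convex_Ici 0)
    · refine Continuous.continuousOn (continuous_iff_continuousAt.2 fun s => ?_)
      exact (hΨderiv s).continuousAt
    · intro s hs
      exact (hΨderiv s).differentiableAt.differentiableWithinAt
    · intro s hs
      rw [interior_Ici] at hs
      rw [(hΨderiv s).deriv]
      have hs0 : (0:ℝ) ≤ s := le_of_lt hs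
      have h1 : u s ≤ Φ s := hΦle s hs0
      have h2 : 0 ≤ a s := mul_nonneg hK (Real.exp_pos _).le
      nlinarith [Real.exp_pos (g s), mul_le_mul_of_nonneg_left h1 h2]
  intro t ht
  have h1 : Ψ t ≤ Ψ 0 := hΨanti (Set.self_mem_Ici) ht ht
  have hΨ0 : Ψ 0 = C * Real.exp (K / β) := by
    simp [hΨ, hΦ, hg]
  have hΦnn : 0 ≤ Φ t := le_trans (hunn t) (hΦle t ht)
  have hgt : 0 ≤ g t := mul_nonneg (div_nonneg hK hβ.le) (Real.exp_pos _).le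
  have h2 : Φ t ≤ Ψ t := le_mul_of_one_le_right hΦnn (Real.one_le_exp hgt)
  calc u t ≤ Φ t := hΦle t ht
    _ ≤ Ψ t := h2
    _ ≤ Ψ 0 := h1
    _ = C * Real.exp (K / β) := hΨ0

/-- stability of the perturbed square-root Riccati flow.
If `ẋ = (A - ½ Σ_t Hᵀ H) x`, with `‖Σ_t - Σ∞‖₂ ≤ M₁ e^{-βt}` and
`‖e^{t(A - ½ Σ∞ Hᵀ H)}‖₂ ≤ √c e^{-βt}` for `t ≥ 0`, `c ≥ 1`, then
`|x_t| ≤ α e^{-βt}|x₀|` with `α = √c · e^{√c M₁ ‖Hᵀ H‖₂/(2β)}`. -/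
theorem stmt2 {d m : ℕ}
    (A : Matrix (Fin d) (Fin d) ℝ) (H : Matrix (Fin m) (Fin d) ℝ)
    (Sinf : Matrix (Fin d) (Fin d) ℝ) (hSinf : Sinf.PosDef)
    (S : ℝ → Matrix (Fin d) (Fin d) ℝ) (hScont : Continuous S)
    (hSpos : ∀ t : ℝ, (S t).PosDef)
    (M₁ β c : ℝ) (hM₁ : 0 < M₁) (hβ : 0 < β) (hc : 1 ≤ c)
    (hSbound : ∀ t : ℝ, 0 ≤ t → specNorm (S t - Sinf) ≤ M₁ * Real.exp (-β * t))
    (hexp : ∀ t : ℝ, 0 ≤ t →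
      specNorm (NormedSpace.exp (t • (A - (1/2 : ℝ) • (Sinf * Hᵀ * H)))) ≤
        Real.sqrt c * Real.exp (-β * t))
    (x : ℝ → EuclideanSpace ℝ (Fin d))
    (hx : ∀ t : ℝ, HasDerivAt x
      (Matrix.toEuclideanCLM (𝕜 := ℝ) (A - (1/2 : ℝ) • (S t * Hᵀ * H)) (x t)) t) :
    ∀ t : ℝ, 0 ≤ t →
      ‖x t‖ ≤ Real.sqrt c * Real.exp (Real.sqrt c * M₁ * specNorm (Hᵀ * H) / (2 * β)) *
        Real.exp (-β * t) * ‖x 0‖ := by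
  set T := Matrix.toEuclideanCLM (n := Fin d) (𝕜 := ℝ) with hT
  set L : EuclideanSpace ℝ (Fin d) →L[ℝ] EuclideanSpace ℝ (Fin d) :=
    T (A - (1/2 : ℝ) • (Sinf * Hᵀ * H)) with hL
  set Ecl : ℝ → (EuclideanSpace ℝ (Fin d) →L[ℝ] EuclideanSpace ℝ (Fin d)) :=
    fun s => (-(1/2) : ℝ) • T ((S s - Sinf) * (Hᵀ * H)) with hEcl
  -- decomposition of the generator
  have hmat : ∀ s : ℝ, A - (1/2 : ℝ) • (S s * Hᵀ * H)
      = (A - (1/2 : ℝ) • (Sinf * Hᵀ * H)) + (-(1/2) : ℝ) • ((S s - Sinf) * (Hᵀ * H)) := by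
    intro s
    rw [Matrix.sub_mul, Matrix.mul_assoc, Matrix.mul_assoc]
    module
  have hxDL : ∀ s : ℝ, HasDerivAt x ((L + Ecl s) (x s)) s := by
    intro s
    have h := hx s
    rw [hmat s, map_add, _root_.map_smul] at h
    exact h
  -- constants
  set N : ℝ := specNorm (Hᵀ * H) with hN
  have hNnn : 0 ≤ N := norm_nonneg _
  set k : ℝ := M₁ * N / 2 with hk
  have hknn : 0 ≤ k := by positivity
  set K : ℝ := Real.sqrt c * k with hK
  have hKnn : 0 ≤ K := mul_nonneg (Real.sqrt_nonneg c) hknn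
  -- bound on perturbation
  have hE : ∀ s : ℝ, 0 ≤ s → ‖Ecl s‖ ≤ k * Real.exp (-β * s) := by
    intro s hs
    have h1 : ‖Ecl s‖ = (1/2) * ‖T ((S s - Sinf) * (Hᵀ * H))‖ := by
      have h0 : Ecl s = (-(1/2) : ℝ) • T ((S s - Sinf) * (Hᵀ * H)) := rfl
      rw [h0, norm_smul ((-(1/2)) : ℝ) (T ((S s - Sinf) * (Hᵀ * H)))]; norm_num
    have h2 : T ((S s - Sinf) * (Hᵀ * H)) = T (S s - Sinf) * T (Hᵀ * H) := map_mul _ _ _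
    have h3 : ‖T (S s - Sinf) * T (Hᵀ * H)‖ ≤ ‖T (S s - Sinf)‖ * ‖T (Hᵀ * H)‖ :=
      norm_mul_le _ _
    have h4 : ‖T (S s - Sinf)‖ ≤ M₁ * Real.exp (-β * s) := hSbound s hs
    have h5 : ‖T (Hᵀ * H)‖ = N := rfl
    rw [h1, h2]
    calc (1/2) * ‖T (S s - Sinf) * T (Hᵀ * H)‖
        ≤ (1/2) * (‖T (S s - Sinf)‖ * ‖T (Hᵀ * H)‖) := by linarith [h3]
      _ ≤ (1/2) * ((M₁ * Real.exp (-β * s)) * N) := by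
          apply mul_le_mul_of_nonneg_left _ (by norm_num)
          rw [h5]
          exact mul_le_mul_of_nonneg_right h4 hNnn
      _ = k * Real.exp (-β * s) := by rw [hk]; ring
  -- bound on semigroup
  have hexpL : ∀ r : ℝ, 0 ≤ r → ‖NormedSpace.exp (r • L)‖ ≤ Real.sqrt c * Real.exp (-β * r) := by
    intro r hr
    have := hexp r hr
    rwa [specNorm, specNorm_exp_smul] at this
  -- continuity facts
  have hxc : Continuous x := by
    rw [continuous_iff_continuousAt]
    exact fun s => (hx s).continuousAt
  have hEclc : Continuous Ecl := by
    refine Continuous.const_smul (g := fun s => T ((S s - Sinf) * (Hᵀ * H))) ?_ (-(1/2) : ℝ)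
    exact toEuclideanCLM_continuous.comp
      (((LinearMap.mulRight ℝ (Hᵀ * H)).continuous_of_finiteDimensional).comp
        (hScont.sub continuous_const))
  have hEx : Continuous fun s => Ecl s (x s) := hEclc.clm_apply hxc
  -- key variation-of-constants estimate
  have key : ∀ t : ℝ, 0 ≤ t →
      ‖x t‖ ≤ Real.sqrt c * Real.exp (-β * t) * ‖x 0‖ +
        ∫ s in (0:ℝ)..t, (K * Real.exp (-β * t)) * ‖x s‖ := by
    intro t ht
    set G : ℝ → EuclideanSpace ℝ (Fin d) :=
      fun s => NormedSpace.exp ((t - s) • L) (x s) with hG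
    let _ : NormedAlgebra ℚ (EuclideanSpace ℝ (Fin d) →L[ℝ] EuclideanSpace ℝ (Fin d)) :=
      .restrictScalars ℚ ℝ _
    have hexpcont : Continuous fun s : ℝ => NormedSpace.exp ((t - s) • L) :=
      NormedSpace.exp_continuous.comp ((continuous_const.sub continuous_id).smul continuous_const)
    have hintegrand : Continuous fun s => NormedSpace.exp ((t - s) • L) (Ecl s (x s)) :=
      hexpcont.clm_apply hEx
    have hGderiv : ∀ s : ℝ, HasDerivAt G (NormedSpace.exp ((t - s) • L) (Ecl s (x s))) s := by
      intro s
      have hinner : HasDerivAt (fun s' : ℝ => t - s') (-1) s := by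
        simpa using (hasDerivAt_id s).const_sub t
      have h1 : HasDerivAt (fun s' : ℝ => NormedSpace.exp ((t - s') • L))
          ((-1 : ℝ) • (NormedSpace.exp ((t - s) • L) * L)) s :=
        HasDerivAt.scomp s (hasDerivAt_exp_smul_const (𝕂 := ℝ) L (t - s)) hinner
      have h2 := h1.clm_apply (hxDL s)
      refine h2.congr_deriv ?_
      simp only [ContinuousLinearMap.smul_apply, ContinuousLinearMap.mul_apply,
        ContinuousLinearMap.add_apply, map_add, neg_smul, one_smul]
      abel
    have hFTC := intervalIntegral.integral_eq_sub_of_hasDerivAt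
      (f := G) (f' := fun s => NormedSpace.exp ((t - s) • L) (Ecl s (x s)))
      (fun s _ => hGderiv s) (hintegrand.intervalIntegrable 0 t)
    have hGt : G t = x t := by
      show NormedSpace.exp ((t - t) • L) (x t) = x t
      have h0 : (t - t) • L = 0 := by rw [sub_self]; exact zero_smul ℝ L
      rw [h0, NormedSpace.exp_zero, ContinuousLinearMap.one_apply]
    have hG0 : G 0 = NormedSpace.exp (t • L) (x 0) := by simp [hG]
    have hvoc : x t = NormedSpace.exp (t • L) (x 0) +
        ∫ s in (0:ℝ)..t, NormedSpace.exp ((t - s) • L) (Ecl s (x s)) := by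
      rw [hFTC, hGt, hG0]; abel
    rw [hvoc]
    refine le_trans (norm_add_le _ _) (add_le_add ?_ ?_)
    · calc ‖NormedSpace.exp (t • L) (x 0)‖ ≤ ‖NormedSpace.exp (t • L)‖ * ‖x 0‖ :=
          ContinuousLinearMap.le_opNorm _ _
        _ ≤ Real.sqrt c * Real.exp (-β * t) * ‖x 0‖ :=
          mul_le_mul_of_nonneg_right (hexpL t ht) (norm_nonneg _)
    · refine le_trans (intervalIntegral.norm_integral_le_integral_norm ht) ?_
      apply intervalIntegral.integral_mono_on ht
        (hintegrand.norm.intervalIntegrable 0 t)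
        ((continuous_const.mul hxc.norm).intervalIntegrable 0 t)
      intro s hs
      obtain ⟨hs0, hst⟩ := hs
      calc ‖NormedSpace.exp ((t - s) • L) (Ecl s (x s))‖
          ≤ ‖NormedSpace.exp ((t - s) • L)‖ * ‖Ecl s (x s)‖ :=
            ContinuousLinearMap.le_opNorm _ _
        _ ≤ (Real.sqrt c * Real.exp (-β * (t - s))) * (‖Ecl s‖ * ‖x s‖) := by
            apply mul_le_mul (hexpL (t - s) (by linarith))
              (ContinuousLinearMap.le_opNorm _ _) (norm_nonneg _)
              (by positivity)
        _ ≤ (Real.sqrt c * Real.exp (-β * (t - s))) * ((k * Real.exp (-β * s)) * ‖x s‖) := by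
            apply mul_le_mul_of_nonneg_left _ (by positivity)
            exact mul_le_mul_of_nonneg_right (hE s hs0) (norm_nonneg _)
        _ = (K * (Real.exp (-β * (t - s)) * Real.exp (-β * s))) * ‖x s‖ := by
            rw [hK]; ring
        _ = (K * Real.exp (-β * t)) * ‖x s‖ := by
            rw [← Real.exp_add]; ring_nf
  -- Grönwall
  set u : ℝ → ℝ := fun s => Real.exp (β * s) * ‖x s‖ with hu
  have hucont : Continuous u := (Real.continuous_exp.comp
    (continuous_const.mul continuous_id)).mul hxc.norm
  have hunn : ∀ s, 0 ≤ u s := fun s => mul_nonneg (Real.exp_pos _).le (norm_nonneg _)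
  set C : ℝ := Real.sqrt c * ‖x 0‖ with hC
  have hgron : ∀ t : ℝ, 0 ≤ t → u t ≤ C + ∫ s in (0:ℝ)..t, K * Real.exp (-β * s) * u s := by
    intro t ht
    have h1 := key t ht
    have hepos : (0:ℝ) < Real.exp (β * t) := Real.exp_pos _
    have h2 : Real.exp (β * t) * ‖x t‖ ≤
        Real.exp (β * t) * (Real.sqrt c * Real.exp (-β * t) * ‖x 0‖ +
          ∫ s in (0:ℝ)..t, (K * Real.exp (-β * t)) * ‖x s‖) :=
      mul_le_mul_of_nonneg_left h1 hepos.le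
    have hee : Real.exp (β * t) * Real.exp (-β * t) = 1 := by
      rw [← Real.exp_add]; simp
    have h3 : Real.exp (β * t) * (Real.sqrt c * Real.exp (-β * t) * ‖x 0‖) = C := by
      rw [hC]
      linear_combination (Real.sqrt c * ‖x 0‖) * hee
    have h4 : Real.exp (β * t) * (∫ s in (0:ℝ)..t, (K * Real.exp (-β * t)) * ‖x s‖) =
        ∫ s in (0:ℝ)..t, K * Real.exp (-β * s) * u s := by
      rw [← intervalIntegral.integral_const_mul]
      apply intervalIntegral.integral_congr
      intro s _
      have hs1 : Real.exp (-β * s) * Real.exp (β * s) = 1 := by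
        rw [← Real.exp_add]; simp
      simp only [hu]
      linear_combination (K * ‖x s‖) * hee - (K * ‖x s‖) * hs1
    rw [mul_add, h3, h4] at h2
    exact h2
  intro t ht
  have hut := gronwall_exp_kernel hucont hunn hKnn hβ hgron t ht
  have hee2 : Real.exp (-β * t) * Real.exp (β * t) = 1 := by
    rw [← Real.exp_add]; simp
  have hxt : ‖x t‖ = Real.exp (-β * t) * u t := by
    simp only [hu]
    calc ‖x t‖ = (Real.exp (-β * t) * Real.exp (β * t)) * ‖x t‖ := by rw [hee2, one_mul]
      _ = Real.exp (-β * t) * (Real.exp (β * t) * ‖x t‖) := by ring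
  have hKβ : K / β = Real.sqrt c * M₁ * N / (2 * β) := by
    rw [hK, hk]
    field_simp
  rw [hxt]
  calc Real.exp (-β * t) * u t
      ≤ Real.exp (-β * t) * (C * Real.exp (K / β)) :=
        mul_le_mul_of_nonneg_left hut (Real.exp_pos _).le
    _ = Real.sqrt c * Real.exp (Real.sqrt c * M₁ * N / (2 * β)) * Real.exp (-β * t) * ‖x 0‖ := by
        rw [hC, hKβ]; ring
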